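/- Let M be a good T-manifold (with Killing vector field K of the circle action), let G = ({U_α}, H, B_α, A_{αβ}) be a weak T-invariant gerbe on M, and let (ξ, ∇^ξ) be a T-equivariant Hermitian line bundle with T-invariant connection that is coupled to G on M. Then the equivariant superconnection ∇^ξ − u ι_K + u^{-1} H on ξ is equivariantly flat, i.e. (∇^ξ − u ι_K + u^{-1} H)^2 + u L_K^ξ = 0, where u is a degree-2 indeterminate and L_K^ξ denotes the Lie derivative on ξ-valued forms along K. -/

import Mathlib

/-!
STATEMENT 0 (Han–Mathai, "Exotic Twisted Equivariant K-Theory", Lemma in §1).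

Let `M` be a good `𝕋`-manifold (with Killing vector field `K` of the circle action), let
`G = ({U_α}, H, B_α, A_{αβ})` be a weak `𝕋`-invariant gerbe on `M`, and let `(ξ, ∇^ξ)` be a
`𝕋`-equivariant Hermitian line bundle with `𝕋`-invariant connection that is coupled to `G` on
`M`.  Then the equivariant superconnection `∇^ξ − u ι_K + u⁻¹ H` on `ξ` is equivariantly
flat: `(∇^ξ − u ι_K + u⁻¹ H)² + u L_K^ξ = 0`, where `u` is a degree-2 indeterminate and
`L_K^ξ` is the Lie derivative on `ξ`-valued forms along `K`.

Formalization.  `I` indexes the `𝕋`-invariant open cover `{U_α}` of the good `𝕋`-manifold.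
`SM` is the space of complex differential forms on `M` (with Cartan operators `dM, ιM, LM`
along `K`); `S α`, `S2 α β`, `S3 α β γ` are the forms on `U_α`, `U_{αβ}`, `U_{αβγ}`, with
their Cartan operators, wedge multiplication operators `mU`, restriction maps
`resU, rL, rR, r3ab, r3bc, r3ac`, and on double/triple overlaps the spaces of points
`P2 α β`, `P3 α β γ` together with contraction-to-function `ι₀`, differential-of-function
`df3` and multiplication-by-function `fmul` operations used to express the `U(1)`-valued
cocycle data.  The gerbe `G` consists of `H` (with `(1/2πi)H` of integral periods, recorded
through the abstract predicate `IP`), the local 2-forms `B α`, the 1-forms `A α β` and the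
`U(1)`-valued functions `Cf α β γ`, subject to the gerbe relations `H = dB_α`,
`B_α − B_β = dA_{αβ}`, `A_{αβ} + A_{βγ} − A_{αγ} = d ln C_{αβγ}`; weak `𝕋`-invariance says
`H, B_α, A_{αβ}` are `𝕋`-invariant and `ι_K A_{αβ} + ι_K A_{βγ} − ι_K A_{αγ} ∈ 2πi·ℤ` on
each connected component of `U_{αβγ}`.

`Ω` is the space of `ξ`-valued forms on `M`, with connection `N = ∇^ξ`, contraction `ι`,
Lie derivative `L`, and the wedge-by-`H` operator `mH`.  The `𝕋`-invariant local bases `s_α`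
of `ξ` identify `ξ`-valued forms on `U_α` with `S α` via the maps `ρ α`, which are jointly
injective and intertwine `ι_K`, `L_K`; the coupling conditions say that in these bases the
connection 1-form of `∇^ξ` is `−ι_K B_α` (hypothesis `h_conn`) and the transition functions
are `e^{−ι_K A_{αβ}}` (hypothesis `h_trans`).  The standard graded commutation rules for
wedging with the odd forms `ι_K B_α` and `H|_{U_α}` are recorded as hypotheses.  The
conclusion is stated in Laurent polynomials in the degree-2 indeterminate `u` (the variable
`T 1`) with coefficients in the operators on `Ω`.
-/

open LaurentPolynomial


private lemma laurent_aux {R : Type*} [Ring R] (a b c l : R)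
    (h1 : b * b = 0) (h3 : c * c = 0) (h4 : a * c + c * a = 0)
    (h5 : a * a = b * c + c * b) (h2 : a * b + b * a = l) :
    (LaurentPolynomial.C a - LaurentPolynomial.C b * LaurentPolynomial.T 1
      + LaurentPolynomial.C c * LaurentPolynomial.T (-1)) ^ 2
      + LaurentPolynomial.C l * LaurentPolynomial.T 1 = 0 := by
  have hC : ∀ r : R, (LaurentPolynomial.C r : R[T;T⁻¹]) = AddMonoidAlgebra.single 0 r :=
    fun r => rfl
  have hCT : ∀ (r : R) (n : ℤ),
      (LaurentPolynomial.C r : R[T;T⁻¹]) * LaurentPolynomial.T n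
        = AddMonoidAlgebra.single n r :=
    fun r n => (LaurentPolynomial.single_eq_C_mul_T r n).symm
  have hT : ∀ n : ℤ, (LaurentPolynomial.T n : R[T;T⁻¹]) = AddMonoidAlgebra.single n 1 :=
    fun n => rfl
  have hca : c * a = -(a * c) := eq_neg_of_add_eq_zero_right h4
  rw [sq, ← h2]
  simp only [hC, hT, sub_mul, mul_sub, add_mul, mul_add, AddMonoidAlgebra.single_mul_single,
    one_mul, mul_one, Int.reduceAdd, Int.reduceNeg, h1, h3, h5, hca,
    AddMonoidAlgebra.single_add, AddMonoidAlgebra.single_neg, AddMonoidAlgebra.single_zero]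
  abel

theorem stmt0
    -- the index set of the `𝕋`-invariant cover `{U_α}` of the good `𝕋`-manifold `M`
    (I : Type)
    -- scalar forms on `M`
    (SM : Type) [AddCommGroup SM] [Module ℂ SM]
    (dM ιM LM : Module.End ℂ SM)
    -- scalar forms on `U_α`, `U_{αβ}`, `U_{αβγ}`, with Cartan operators
    (S : I → Type) [∀ α, AddCommGroup (S α)] [∀ α, Module ℂ (S α)]
    (dU ιU LU : ∀ α, Module.End ℂ (S α))
    (S2 : I → I → Type) [∀ α β, AddCommGroup (S2 α β)] [∀ α β, Module ℂ (S2 α β)]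
    (d2 ι2 L2 : ∀ α β, Module.End ℂ (S2 α β))
    (S3 : I → I → I → Type) [∀ α β γ, AddCommGroup (S3 α β γ)]
    [∀ α β γ, Module ℂ (S3 α β γ)]
    -- wedge multiplication on `U_α`
    (mU : ∀ α, S α →ₗ[ℂ] Module.End ℂ (S α))
    -- restriction maps
    (resU : ∀ α, SM →ₗ[ℂ] S α)
    (rL : ∀ α β, S α →ₗ[ℂ] S2 α β) (rR : ∀ α β, S β →ₗ[ℂ] S2 α β)
    (r3ab : ∀ α β γ, S2 α β →ₗ[ℂ] S3 α β γ)
    (r3bc : ∀ α β γ, S2 β γ →ₗ[ℂ] S3 α β γ)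
    (r3ac : ∀ α β γ, S2 α γ →ₗ[ℂ] S3 α β γ)
    -- points of the double and triple overlaps, with the function-level operations
    (P2 : I → I → Type) (P3 : I → I → I → Type) [∀ α β γ, TopologicalSpace (P3 α β γ)]
    (ι₀2 : ∀ α β, S2 α β →ₗ[ℂ] (P2 α β → ℂ))
    (ι₀3 : ∀ α β γ, S3 α β γ →ₗ[ℂ] (P3 α β γ → ℂ))
    (df3 : ∀ α β γ, (P3 α β γ → ℂ) →ₗ[ℂ] S3 α β γ)
    (fmul2 : ∀ α β, (P2 α β → ℂ) → S2 α β → S2 α β)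
    (fmul3 : ∀ α β γ, (P3 α β γ → ℂ) → S3 α β γ → S3 α β γ)
    -- Cartan calculus on each `U_α`
    (hd2 : ∀ α, dU α * dU α = 0)
    (hι2U : ∀ α, ιU α * ιU α = 0)
    (hcartanU : ∀ α, dU α * ιU α + ιU α * dU α = LU α)
    /- ===== the gerbe `G = ({U_α}, H, B_α, A_{αβ})` ===== -/
    (H : SM) (B : ∀ α, S α) (A : ∀ α β, S2 α β) (Cf : ∀ α β γ, P3 α β γ → ℂ)
    -- `(1/2πi) H` has integral periods (abstract predicate)
    (IP : SM → Prop) (hIP : IP H)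
    -- `H = dB_α` on `U_α`
    (hHB : ∀ α, resU α H = dU α (B α))
    -- `B_α − B_β = dA_{αβ}` on `U_{αβ}`
    (hBA : ∀ α β, rL α β (B α) - rR α β (B β) = d2 α β (A α β))
    -- `A_{αβ} + A_{βγ} − A_{αγ} = d ln C_{αβγ}` with `C_{αβγ}` `U(1)`-valued
    (hCnorm : ∀ α β γ (x : P3 α β γ), ‖Cf α β γ x‖ = 1)
    (hdlnC : ∀ α β γ, fmul3 α β γ (Cf α β γ)
        (r3ab α β γ (A α β) + r3bc α β γ (A β γ) - r3ac α β γ (A α γ))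
      = df3 α β γ (Cf α β γ))
    /- ===== weak `𝕋`-invariance of the gerbe ===== -/
    (hHinv : LM H = 0)
    (hBinv : ∀ α, LU α (B α) = 0)
    (hAinv : ∀ α β, L2 α β (A α β) = 0)
    -- `ι_K A_{αβ} + ι_K A_{βγ} − ι_K A_{αγ}` takes values in `2πi·ℤ` on each connected
    -- component of `U_{αβγ}`
    (hweak : ∀ α β γ (x : P3 α β γ), ∃ n : ℤ, ∀ y ∈ connectedComponent x,
        ι₀3 α β γ (r3ab α β γ (A α β) + r3bc α β γ (A β γ) - r3ac α β γ (A α γ)) y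
          = 2 * Real.pi * Complex.I * n)
    /- ===== the coupled `𝕋`-equivariant line bundle `(ξ, ∇^ξ)` ===== -/
    -- `ξ`-valued forms on `M`, with `∇^ξ`, `ι_K`, `L_K^ξ` and the wedge-by-`H` operator
    (Ω : Type) [AddCommGroup Ω] [Module ℂ Ω]
    (N ι L : Module.End ℂ Ω) (mH : Module.End ℂ Ω)
    -- identification of `ξ`-valued forms over `U_α` with `S α` via the `𝕋`-invariant
    -- local bases `s_α`; the `ρ α` are jointly injective and intertwine `ι_K`, `L_K`
    -- and wedging by `H`
    (ρ : ∀ α, Ω →ₗ[ℂ] S α)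
    (hρ_inj : ∀ x : Ω, (∀ α, ρ α x = 0) → x = 0)
    (hρι : ∀ α (x : Ω), ρ α (ι x) = ιU α (ρ α x))
    (hρL : ∀ α (x : Ω), ρ α (L x) = LU α (ρ α x))
    (hρH : ∀ α (x : Ω), ρ α (mH x) = mU α (resU α H) (ρ α x))
    -- coupling condition (i): in the basis `s_α` the connection 1-form of `∇^ξ` is
    -- `−ι_K B_α`, i.e. `∇^ξ = d − (ι_K B_α) ∧ ·` over `U_α`
    (h_conn : ∀ α (x : Ω), ρ α (N x) = (dU α - mU α (ιU α (B α))) (ρ α x))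
    -- coupling condition (ii): the transition functions of `ξ` are `e^{−ι_K A_{αβ}}`
    (h_trans : ∀ α β (x : Ω),
        rL α β (ρ α x)
          = fmul2 α β (fun p => Complex.exp (-(ι₀2 α β (A α β) p))) (rR α β (ρ β x)))
    /- ===== graded commutation rules for wedging with the odd local forms ===== -/
    -- rules for the 1-form `ι_K B_α`
    (hm1sq : ∀ α, mU α (ιU α (B α)) * mU α (ιU α (B α)) = 0)
    (hm1d : ∀ α, dU α * mU α (ιU α (B α)) + mU α (ιU α (B α)) * dU α
        = mU α (dU α (ιU α (B α))))
    (hm1ι : ∀ α, ιU α * mU α (ιU α (B α)) + mU α (ιU α (B α)) * ιU α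
        = mU α (ιU α (ιU α (B α))))
    -- rules for the 3-form `H|_{U_α}`
    (hm3sq : ∀ α, mU α (resU α H) * mU α (resU α H) = 0)
    (hm3d : ∀ α, dU α * mU α (resU α H) + mU α (resU α H) * dU α
        = mU α (dU α (resU α H)))
    (hm3ι : ∀ α, ιU α * mU α (resU α H) + mU α (resU α H) * ιU α
        = mU α (ιU α (resU α H)))
    -- the two odd forms anticommute
    (hm13 : ∀ α, mU α (ιU α (B α)) * mU α (resU α H)
        + mU α (resU α H) * mU α (ιU α (B α)) = 0) :
    /- ===== conclusion: equivariant flatness of `∇^ξ − u ι_K + u⁻¹ H` ===== -/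
    (C N - C ι * T 1 + C mH * T (-1)) ^ 2 + C L * T 1 = 0 := by
  -- jointly-injective criterion for equality of operators on `Ω`
  have hext : ∀ (E F : Module.End ℂ Ω), (∀ α (x : Ω), ρ α (E x) = ρ α (F x)) → E = F := by
    intro E F h
    ext x
    have : E x - F x = 0 := hρ_inj _ (fun α => by rw [map_sub, h, sub_self])
    exact sub_eq_zero.mp this
  -- `ι² = 0`
  have h_ii : ι * ι = 0 := by
    apply hext
    intro α x
    have h := LinearMap.ext_iff.mp (hι2U α) (ρ α x)
    simp only [Module.End.mul_apply, LinearMap.zero_apply] at h ⊢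
    rw [hρι, hρι, map_zero, h]
  -- `(mH)² = 0`
  have h_HH : mH * mH = 0 := by
    apply hext
    intro α x
    have h := LinearMap.ext_iff.mp (hm3sq α) (ρ α x)
    simp only [Module.End.mul_apply, LinearMap.zero_apply] at h ⊢
    rw [hρH, hρH, map_zero, h]
  -- `N ι + ι N = L`
  have h_Nι : N * ι + ι * N = L := by
    apply hext
    intro α x
    have hB : ιU α (ιU α (B α)) = 0 := LinearMap.ext_iff.mp (hι2U α) (B α)
    have hc := LinearMap.ext_iff.mp (hcartanU α) (ρ α x)
    have hm := LinearMap.ext_iff.mp (hm1ι α) (ρ α x)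
    simp only [LinearMap.add_apply, Module.End.mul_apply] at hc hm ⊢
    rw [hB] at hm
    simp only [map_zero, LinearMap.zero_apply] at hm
    have hm' : ιU α ((mU α (ιU α (B α))) (ρ α x))
        = -((mU α (ιU α (B α))) (ιU α (ρ α x))) := eq_neg_of_add_eq_zero_left hm
    simp only [map_add, h_conn, hρι, hρL, LinearMap.sub_apply, map_sub]
    rw [← hc, hm']
    abel
  -- `N mH + mH N = 0`
  have h_NH : N * mH + mH * N = 0 := by
    apply hext
    intro α x
    have hdH : dU α (resU α H) = 0 := by
      rw [hHB]; exact LinearMap.ext_iff.mp (hd2 α) (B α)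
    have hm3 := LinearMap.ext_iff.mp (hm3d α) (ρ α x)
    have hm13' := LinearMap.ext_iff.mp (hm13 α) (ρ α x)
    simp only [LinearMap.add_apply, Module.End.mul_apply, LinearMap.zero_apply] at hm3 hm13' ⊢
    rw [hdH] at hm3
    simp only [map_zero, LinearMap.zero_apply] at hm3
    have e1 : dU α ((mU α (resU α H)) (ρ α x))
        = -((mU α (resU α H)) (dU α (ρ α x))) := eq_neg_of_add_eq_zero_left hm3
    have e2 : (mU α (ιU α (B α))) ((mU α (resU α H)) (ρ α x))
        = -((mU α (resU α H)) ((mU α (ιU α (B α))) (ρ α x))) :=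
      eq_neg_of_add_eq_zero_left hm13'
    simp only [map_add, h_conn, hρH, LinearMap.sub_apply, map_sub, map_zero]
    rw [e1, e2]
    abel
  -- `N² = ι mH + mH ι`
  have h_NN : N * N = ι * mH + mH * ι := by
    apply hext
    intro α x
    have hd2' := LinearMap.ext_iff.mp (hd2 α) (ρ α x)
    have hm1sq' := LinearMap.ext_iff.mp (hm1sq α) (ρ α x)
    have hm1d' := LinearMap.ext_iff.mp (hm1d α) (ρ α x)
    have hm3ι' := LinearMap.ext_iff.mp (hm3ι α) (ρ α x)
    have hιH : ιU α (resU α H) = -(dU α (ιU α (B α))) := by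
      have hcB := LinearMap.ext_iff.mp (hcartanU α) (B α)
      simp only [LinearMap.add_apply, Module.End.mul_apply] at hcB
      rw [hBinv α] at hcB
      rw [hHB]
      exact eq_neg_of_add_eq_zero_right hcB
    simp only [LinearMap.add_apply, Module.End.mul_apply, LinearMap.zero_apply]
      at hd2' hm1sq' hm1d' hm3ι' ⊢
    rw [hιH] at hm3ι'
    simp only [map_neg, LinearMap.neg_apply] at hm3ι'
    simp only [map_add, h_conn, hρH, hρι, LinearMap.sub_apply, map_sub]
    rw [hd2', hm1sq', hm3ι', ← hm1d']
    abel
  exact laurent_aux N ι mH L h_ii h_HH h_NH h_NN h_Nι
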